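/- For a unit vector v in an inner product space and any x, ⟨H_k(x), v^{⊗k}⟩ = h_k(v·x), where H_k is the k-th normalized Hermite tensor and h_k the k-th normalized probabilist's Hermite polynomial. -/
import Mathlib


open MeasureTheory ProbabilityTheory

/-- The standard Gaussian measure `N(0, I_d)` on `ℝ^d`. -/
noncomputable def stdGaussian (d : ℕ) : Measure (Fin d → ℝ) :=
  Measure.pi fun _ => gaussianReal 0 1

/-- The `m`-th normalized probabilist's Hermite polynomial `h_m(t) = He_m(t)/√(m!)`. -/
noncomputable def hermiteN (m : ℕ) (t : ℝ) : ℝ :=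
  (Polynomial.aeval t (Polynomial.hermite m)) / Real.sqrt (Nat.factorial m)

/-- `c_m = E_{G ~ N(0,1)}[ReLU(G) h_m(G)]`. -/
noncomputable def reluCoeff (m : ℕ) : ℝ :=
  ∫ t, max 0 t * hermiteN m t ∂(gaussianReal 0 1)

/-- The entries of the `m`-th normalized Hermite tensor `H_m(x)` on `ℝ^d`:
`(H_m(x))_{i_1,…,i_m} = (1/√(m!)) Σ_{partitions P of [m] into singletons and pairs}`
`⊗_{{a,b} ∈ P} (−I_{i_a,i_b}) ⊗_{{c} ∈ P} x_{i_c}`.  Such partitions are encoded as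
involutions `f : Fin m → Fin m` (pairs are the 2-cycles, singletons the fixed points). -/
noncomputable def hermiteTensor (d m : ℕ) (x : Fin d → ℝ) (i : Fin m → Fin d) : ℝ :=
  (Real.sqrt (Nat.factorial m))⁻¹ *
    ∑ f ∈ Finset.univ.filter (fun f : Fin m → Fin m => ∀ a, f (f a) = a),
      ∏ a, (if f a = a then x (i a)
            else if a < f a then (if i a = i (f a) then (-1 : ℝ) else 0) else 1)

/-- The pairing `⟨H_m(x), v^{⊗m}⟩`. -/
noncomputable def hermitePairing (d m : ℕ) (x v : Fin d → ℝ) : ℝ :=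
  ∑ i : Fin m → Fin d, hermiteTensor d m x i * ∏ a, v (i a)

section HermiteAux

open Finset Polynomial

/-- The finset of involutions of `Fin k`. -/
def Invol (k : ℕ) : Finset (Fin k → Fin k) :=
  Finset.univ.filter (fun f : Fin k → Fin k => ∀ a, f (f a) = a)

lemma mem_Invol {k : ℕ} {f : Fin k → Fin k} : f ∈ Invol k ↔ ∀ a, f (f a) = a := by
  simp [Invol]

lemma invol_inj {k : ℕ} {f : Fin k → Fin k} (hf : ∀ a, f (f a) = a) :
    Function.Injective f := fun a b h => by rw [← hf a, h, hf b]

/-- number of fixed points -/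
def fixc {k : ℕ} (f : Fin k → Fin k) : ℕ := (Finset.univ.filter fun a => f a = a).card

/-- number of pairs -/
def prc {k : ℕ} (f : Fin k → Fin k) : ℕ := (Finset.univ.filter fun a => a < f a).card

/-- extend an involution of `Fin k` to `Fin (k+1)` by fixing the last element. -/
def extF {k : ℕ} (g : Fin k → Fin k) : Fin (k + 1) → Fin (k + 1) :=
  Fin.snoc (fun b => (g b).castSucc) (Fin.last k)

/-- extend an involution of `Fin k` fixing `j` to `Fin (k+1)` pairing `j` with the last. -/
def embF {k : ℕ} (j : Fin k) (g : Fin k → Fin k) : Fin (k + 1) → Fin (k + 1) :=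
  Fin.snoc (fun b => if b = j then Fin.last k else (g b).castSucc) j.castSucc

@[simp] lemma extF_castSucc {k : ℕ} (g : Fin k → Fin k) (b : Fin k) :
    extF g b.castSucc = (g b).castSucc := by simp [extF]

@[simp] lemma extF_last {k : ℕ} (g : Fin k → Fin k) :
    extF g (Fin.last k) = Fin.last k := by simp [extF]

@[simp] lemma embF_castSucc {k : ℕ} (j : Fin k) (g : Fin k → Fin k) (b : Fin k) :
    embF j g b.castSucc = if b = j then Fin.last k else (g b).castSucc := by simp [embF]

@[simp] lemma embF_last {k : ℕ} (j : Fin k) (g : Fin k → Fin k) :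
    embF j g (Fin.last k) = j.castSucc := by simp [embF]

lemma extF_mem {k : ℕ} {g : Fin k → Fin k} (hg : g ∈ Invol k) : extF g ∈ Invol (k + 1) := by
  rw [mem_Invol] at hg ⊢
  intro a
  induction a using Fin.lastCases with
  | last => simp
  | cast b => simp [hg b]

lemma embF_mem {k : ℕ} {j : Fin k} {g : Fin k → Fin k} (hg : ∀ a, g (g a) = a)
    (hj : g j = j) : embF j g ∈ Invol (k + 1) := by
  rw [mem_Invol]
  intro a
  induction a using Fin.lastCases with
  | last => simp [hj]
  | cast b =>
    rcases eq_or_ne b j with rfl | hbj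
    · simp
    · have hgbj : g b ≠ j := fun h => hbj (by rw [← hg b, h, hj])
      simp [hbj, hgbj, hg b]

/-- restriction of a map on `Fin (k+1)` to `Fin k` (junk value when out of range). -/
def resF {k : ℕ} (f : Fin (k + 1) → Fin (k + 1)) (b : Fin k) : Fin k :=
  if h : (f b.castSucc : ℕ) < k then ⟨_, h⟩ else b

lemma resF_spec {k : ℕ} {f : Fin (k + 1) → Fin (k + 1)} {b : Fin k}
    (h : f b.castSucc ≠ Fin.last k) : (resF f b).castSucc = f b.castSucc := by
  have h2 := (f b.castSucc).isLt
  have h3 : (f b.castSucc : ℕ) ≠ k := fun hh => h (Fin.ext (by simpa using hh))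
  have hlt : (f b.castSucc : ℕ) < k := by omega
  rw [resF, dif_pos hlt]
  exact Fin.ext (by simp)

lemma hne_of_fixedLast {k : ℕ} {f : Fin (k + 1) → Fin (k + 1)} (hinv : ∀ a, f (f a) = a)
    (hla : f (Fin.last k) = Fin.last k) (b : Fin k) : f b.castSucc ≠ Fin.last k := fun h =>
  (Fin.castSucc_lt_last b).ne (invol_inj hinv (h.trans hla.symm))

lemma ext_eq {k : ℕ} {f : Fin (k + 1) → Fin (k + 1)} (hinv : ∀ a, f (f a) = a)
    (hla : f (Fin.last k) = Fin.last k) : extF (resF f) = f := by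
  funext a
  induction a using Fin.lastCases with
  | last => rw [extF_last, hla]
  | cast b => rw [extF_castSucc, resF_spec (hne_of_fixedLast hinv hla b)]

lemma hne_of_ne {k : ℕ} {f : Fin (k + 1) → Fin (k + 1)} (hinv : ∀ a, f (f a) = a)
    {b : Fin k} (hb : b.castSucc ≠ f (Fin.last k)) : f b.castSucc ≠ Fin.last k := by
  intro h
  apply hb
  rw [← hinv b.castSucc, h]

lemma emb_eq {k : ℕ} {f : Fin (k + 1) → Fin (k + 1)} (hinv : ∀ a, f (f a) = a)
    (hla : f (Fin.last k) ≠ Fin.last k) :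
    embF (Fin.castPred (f (Fin.last k)) hla)
      (fun b => if b.castSucc = f (Fin.last k) then b else resF f b) = f := by
  have hj : (Fin.castPred (f (Fin.last k)) hla).castSucc = f (Fin.last k) :=
    Fin.castSucc_castPred _ hla
  funext a
  induction a using Fin.lastCases with
  | last => rw [embF_last, hj]
  | cast b =>
    rw [embF_castSucc]
    rcases eq_or_ne b (Fin.castPred (f (Fin.last k)) hla) with rfl | hbj
    · rw [if_pos rfl, hj, hinv]
    · have hb : b.castSucc ≠ f (Fin.last k) := by
        rw [← hj]; exact fun h => hbj (Fin.castSucc_inj.mp h)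
      rw [if_neg hbj, if_neg hb, resF_spec (hne_of_ne hinv hb)]

/-- the split of the involutions of `Fin (k+1)` according to the image of the last element. -/
lemma invol_split {k : ℕ} {M : Type*} [AddCommMonoid M]
    (F : (Fin (k + 1) → Fin (k + 1)) → M) :
    ∑ f ∈ Invol (k + 1), F f
      = (∑ g ∈ Invol k, F (extF g)) +
        ∑ q ∈ (Finset.univ.filter
            (fun q : Fin k × (Fin k → Fin k) => (∀ a, q.2 (q.2 a) = a) ∧ q.2 q.1 = q.1)),
          F (embF q.1 q.2) := by
  classical
  rw [← Finset.sum_filter_add_sum_filter_not (Invol (k + 1))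
    (fun f => f (Fin.last k) = Fin.last k)]
  congr 1
  · refine Finset.sum_bij' (fun f _ => resF f) (fun g _ => extF g) ?_ ?_ ?_ ?_ ?_
    · intro f hf
      simp only [Finset.mem_filter, mem_Invol] at hf
      obtain ⟨hinv, hla⟩ := hf
      rw [mem_Invol]
      intro b
      apply Fin.castSucc_inj.mp
      rw [resF_spec (hne_of_fixedLast hinv hla _),
        resF_spec (hne_of_fixedLast hinv hla b), hinv]
    · intro g hg
      simp only [Finset.mem_filter]
      exact ⟨extF_mem hg, extF_last g⟩
    · intro f hf
      simp only [Finset.mem_filter, mem_Invol] at hf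
      exact ext_eq hf.1 hf.2
    · intro g hg
      beta_reduce
      funext b
      apply Fin.castSucc_inj.mp
      rw [resF_spec (by rw [extF_castSucc]; exact (Fin.castSucc_lt_last _).ne), extF_castSucc]
    · intro f hf
      simp only [Finset.mem_filter, mem_Invol] at hf
      exact (congrArg F (ext_eq hf.1 hf.2)).symm
  · refine Finset.sum_bij'
      (fun f hf => ((Fin.castPred (f (Fin.last k))
          (by simpa using (Finset.mem_filter.mp hf).2)),
        fun b => if b.castSucc = f (Fin.last k) then b else resF f b))
      (fun q _ => embF q.1 q.2) ?_ ?_ ?_ ?_ ?_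
    · intro f hf
      simp only [Finset.mem_filter, mem_Invol] at hf
      obtain ⟨hinv, hla⟩ := hf
      simp only [Finset.mem_filter, Finset.mem_univ, true_and]
      have hj : (Fin.castPred (f (Fin.last k)) hla).castSucc = f (Fin.last k) :=
        Fin.castSucc_castPred _ hla
      constructor
      · intro b
        rcases eq_or_ne (b.castSucc) (f (Fin.last k)) with hb | hb
        · simp only [hb, if_pos]
        · have h1 : ((if b.castSucc = f (Fin.last k) then b else resF f b)) = resF f b :=
            if_neg hb
          rw [h1]
          have h2 : (resF f b).castSucc = f b.castSucc := resF_spec (hne_of_ne hinv hb)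
          have h3 : (resF f b).castSucc ≠ f (Fin.last k) := by
            rw [h2]
            intro h
            exact (Fin.castSucc_lt_last b).ne (invol_inj hinv h)
          rw [if_neg h3]
          apply Fin.castSucc_inj.mp
          rw [resF_spec (hne_of_ne hinv h3), h2, hinv]
      · exact if_pos hj
    · intro q hq
      simp only [Finset.mem_filter, Finset.mem_univ, true_and] at hq
      simp only [Finset.mem_filter]
      refine ⟨embF_mem hq.1 hq.2, ?_⟩
      rw [embF_last]
      exact (Fin.castSucc_lt_last _).ne
    · intro f hf
      simp only [Finset.mem_filter, mem_Invol] at hf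
      exact emb_eq hf.1 (by simpa using hf.2)
    · intro q hq
      simp only [Finset.mem_filter, Finset.mem_univ, true_and] at hq
      obtain ⟨hg, hfix⟩ := hq
      beta_reduce
      have h1 : embF q.1 q.2 (Fin.last k) = q.1.castSucc := embF_last _ _
      refine Prod.ext ?_ ?_
      · apply Fin.castSucc_inj.mp
        rw [Fin.castSucc_castPred, h1]
      · funext b
        simp only
        rw [h1]
        rcases eq_or_ne b q.1 with rfl | hbj
        · rw [if_pos rfl, hfix]
        · rw [if_neg (fun h => hbj (Fin.castSucc_inj.mp h))]
          apply Fin.castSucc_inj.mp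
          rw [resF_spec (by rw [embF_castSucc, if_neg hbj]; exact (Fin.castSucc_lt_last _).ne),
            embF_castSucc, if_neg hbj]
    · intro f hf
      simp only [Finset.mem_filter, mem_Invol] at hf
      exact (congrArg F (emb_eq hf.1 (by simpa using hf.2))).symm

/-- the (un-normalized) involution-generating polynomial. -/
noncomputable def IP (k : ℕ) : Polynomial ℤ :=
  ∑ f ∈ Invol k, Polynomial.C ((-1 : ℤ) ^ (prc f)) * Polynomial.X ^ (fixc f)

lemma fixc_extF {k : ℕ} {g : Fin k → Fin k} : fixc (extF g) = fixc g + 1 := by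
  simp only [fixc, Finset.card_filter]
  rw [Fin.sum_univ_castSucc]
  simp [Fin.castSucc_inj]

lemma prc_extF {k : ℕ} {g : Fin k → Fin k} : prc (extF g) = prc g := by
  simp only [prc, Finset.card_filter]
  rw [Fin.sum_univ_castSucc]
  simp [Fin.castSucc_lt_castSucc_iff]

lemma fixc_embF {k : ℕ} {j : Fin k} {g : Fin k → Fin k} (hj : g j = j) :
    fixc g = fixc (embF j g) + 1 := by
  simp only [fixc, Finset.card_filter]
  rw [Fin.sum_univ_castSucc]
  have hlast : ¬ (j.castSucc = Fin.last k) := (Fin.castSucc_lt_last j).ne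
  simp only [embF_castSucc, embF_last, hlast, if_false, add_zero]
  have : ∀ b : Fin k, (if g b = b then (1:ℕ) else 0)
      = (if (if b = j then Fin.last k else (g b).castSucc) = b.castSucc then 1 else 0)
        + (if b = j then 1 else 0) := by
    intro b
    rcases eq_or_ne b j with rfl | hbj
    · simp [hj, (Fin.castSucc_lt_last b).ne']
    · simp [hbj, Fin.castSucc_inj]
  rw [Finset.sum_congr rfl (fun b _ => this b), Finset.sum_add_distrib]
  simp

lemma prc_embF {k : ℕ} {j : Fin k} {g : Fin k → Fin k} (hj : g j = j) :
    prc (embF j g) = prc g + 1 := by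
  simp only [prc, Finset.card_filter]
  rw [Fin.sum_univ_castSucc]
  have hlast : ¬ (Fin.last k < j.castSucc) := not_lt.mpr (Fin.castSucc_lt_last j).le
  simp only [embF_castSucc, embF_last, hlast, if_false, add_zero]
  have : ∀ b : Fin k, (if b.castSucc < (if b = j then Fin.last k else (g b).castSucc) then (1:ℕ) else 0)
      = (if b < g b then 1 else 0) + (if b = j then 1 else 0) := by
    intro b
    rcases eq_or_ne b j with rfl | hbj
    · simp [hj, Fin.castSucc_lt_last]
    · simp [hbj, Fin.castSucc_lt_castSucc_iff]
  rw [Finset.sum_congr rfl (fun b _ => this b), Finset.sum_add_distrib]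
  simp [add_comm]

lemma IP_zero : IP 0 = 1 := by
  have h1 : (Invol 0 : Finset (Fin 0 → Fin 0)) = {fun a => a} := by
    apply Finset.eq_singleton_iff_unique_mem.mpr
    constructor
    · simp [mem_Invol]
    · intro f _; funext a; exact absurd a.2 (by omega)
  have h2 : fixc (fun a : Fin 0 => a) = 0 := by simp [fixc]
  have h3 : prc (fun a : Fin 0 => a) = 0 := by simp [prc]
  simp [IP, h1, h2, h3]

lemma IP_succ (k : ℕ) : IP (k + 1) = X * IP k - derivative (IP k) := by
  rw [IP, invol_split (fun f => Polynomial.C ((-1 : ℤ) ^ prc f) * Polynomial.X ^ fixc f),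
    sub_eq_add_neg]
  congr 1
  · rw [IP, Finset.mul_sum]
    refine Finset.sum_congr rfl fun g hg => ?_
    beta_reduce
    rw [prc_extF, fixc_extF, pow_succ]
    ring
  · have hQ : ∀ q ∈ (Finset.univ.filter
        (fun q : Fin k × (Fin k → Fin k) => (∀ a, q.2 (q.2 a) = a) ∧ q.2 q.1 = q.1)),
        (fun f => Polynomial.C ((-1 : ℤ) ^ prc f) * Polynomial.X ^ fixc f) (embF q.1 q.2)
          = Polynomial.C (-(-1 : ℤ) ^ prc q.2) * Polynomial.X ^ (fixc q.2 - 1) := by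
      intro q hq
      simp only [Finset.mem_filter, Finset.mem_univ, true_and] at hq
      beta_reduce
      rw [prc_embF hq.2, pow_succ]
      have hfix : fixc (embF q.1 q.2) = fixc q.2 - 1 := by
        have := fixc_embF (j := q.1) (g := q.2) hq.2
        omega
      rw [hfix]
      ring_nf
    rw [Finset.sum_congr rfl hQ]
    rw [Finset.sum_finset_product_right _ (Invol k)
      (fun g => Finset.univ.filter (fun j => g j = j))
      (by
        intro p
        simp [mem_Invol, and_comm])]
    rw [IP, map_sum]
    rw [← Finset.sum_neg_distrib]
    refine Finset.sum_congr rfl fun g hg => ?_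
    have hsum : (∑ a ∈ Finset.univ.filter (fun j => g j = j),
        Polynomial.C (-(-1 : ℤ) ^ prc ((a, g)).2) * Polynomial.X ^ (fixc ((a, g)).2 - 1))
        = (fixc g) • (Polynomial.C (-(-1 : ℤ) ^ prc g) * Polynomial.X ^ (fixc g - 1)) := by
      calc (∑ a ∈ Finset.univ.filter (fun j => g j = j),
            Polynomial.C (-(-1 : ℤ) ^ prc ((a, g)).2) * Polynomial.X ^ (fixc ((a, g)).2 - 1))
          = ∑ _a ∈ Finset.univ.filter (fun j => g j = j),
            Polynomial.C (-(-1 : ℤ) ^ prc g) * Polynomial.X ^ (fixc g - 1) :=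
            Finset.sum_congr rfl (fun a _ => rfl)
        _ = (fixc g) • (Polynomial.C (-(-1 : ℤ) ^ prc g) * Polynomial.X ^ (fixc g - 1)) :=
            Finset.sum_const _
    rw [hsum, derivative_C_mul_X_pow, nsmul_eq_mul, ← Polynomial.C_eq_natCast, ← mul_assoc,
      ← Polynomial.C_mul, ← neg_mul, ← Polynomial.C_neg]
    congr 2
    ring


lemma IP_eq (k : ℕ) : IP k = Polynomial.hermite k := by
  induction k with
  | zero => rw [IP_zero, hermite_zero, Polynomial.C_1]
  | succ n ih => rw [IP_succ, ih, hermite_succ]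

lemma sum_prod_invol (d : ℕ) (v : Fin d → ℝ) (hv : ∑ j, v j ^ 2 = 1) :
    ∀ (k : ℕ) (f : Fin k → Fin k), (∀ a, f (f a) = a) → ∀ φ : Fin k → Fin d → ℝ,
    (∑ i : Fin k → Fin d, ∏ a,
      ((if f a = a then φ a (i a)
        else if a < f a then (if i a = i (f a) then (-1 : ℝ) else 0) else 1) * v (i a)))
    = ∏ a, (if f a = a then (∑ jd, φ a jd * v jd) else if a < f a then (-1 : ℝ) else 1) := by
  intro k
  induction k with
  | zero =>
    intro f hf φ
    simp
  | succ k ih =>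
    intro f hf φ
    have hsplit : ∀ (H : (Fin (k + 1) → Fin d) → ℝ),
        ∑ i, H i = ∑ jd : Fin d, ∑ i₀ : Fin k → Fin d, H (Fin.snoc i₀ jd) := by
      intro H
      rw [← (Equiv.sum_comp (Fin.snocEquiv (fun _ => Fin d)) H), Fintype.sum_prod_type]
      rfl
    by_cases hla : f (Fin.last k) = Fin.last k
    · obtain ⟨g, hg, rfl⟩ : ∃ g, (∀ a, g (g a) = a) ∧ extF g = f := by
        refine ⟨resF f, ?_, ext_eq hf hla⟩
        intro b
        apply Fin.castSucc_inj.mp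
        rw [resF_spec (hne_of_fixedLast hf hla _),
          resF_spec (hne_of_fixedLast hf hla b), hf]
      rw [hsplit]
      have hterm : ∀ (jd : Fin d) (i₀ : Fin k → Fin d),
          (∏ a : Fin (k + 1),
            ((if extF g a = a then φ a ((Fin.snoc i₀ jd : Fin (k + 1) → Fin d) a)
              else if a < extF g a then
                (if (Fin.snoc i₀ jd : Fin (k + 1) → Fin d) a = (Fin.snoc i₀ jd : Fin (k + 1) → Fin d) (extF g a) then (-1 : ℝ) else 0)
              else 1) * v ((Fin.snoc i₀ jd : Fin (k + 1) → Fin d) a)))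
          = (∏ b : Fin k,
              ((if g b = b then φ b.castSucc (i₀ b)
                else if b < g b then (if i₀ b = i₀ (g b) then (-1 : ℝ) else 0) else 1)
                * v (i₀ b)))
            * (φ (Fin.last k) jd * v jd) := by
        intro jd i₀
        rw [Fin.prod_univ_castSucc]
        congr 1
        · refine Finset.prod_congr rfl fun b _ => ?_
          simp [Fin.castSucc_inj, Fin.castSucc_lt_castSucc_iff]
        · simp
      simp only [hterm]
      simp only [← Finset.sum_mul]
      rw [← Finset.mul_sum, ih g hg (fun b => φ b.castSucc), Fin.prod_univ_castSucc]
      congr 1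
      · refine Finset.prod_congr rfl fun b _ => ?_
        simp [Fin.castSucc_inj, Fin.castSucc_lt_castSucc_iff]
      · simp
    · obtain ⟨j, g, hg, hgj, rfl⟩ :
          ∃ j g, (∀ a, g (g a) = a) ∧ g j = j ∧ embF j g = f := by
        refine ⟨(f (Fin.last k)).castPred hla,
          fun b => if b.castSucc = f (Fin.last k) then b else resF f b, ?_, ?_,
          emb_eq hf hla⟩
        · intro b
          beta_reduce
          rcases eq_or_ne (b.castSucc) (f (Fin.last k)) with hb | hb
          · simp only [hb, if_pos]
          · have h1 : ((if b.castSucc = f (Fin.last k) then b else resF f b)) = resF f b :=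
              if_neg hb
            rw [h1]
            have h2 : (resF f b).castSucc = f b.castSucc := resF_spec (hne_of_ne hf hb)
            have h3 : (resF f b).castSucc ≠ f (Fin.last k) := by
              rw [h2]
              intro h
              exact (Fin.castSucc_lt_last b).ne (invol_inj hf h)
            rw [if_neg h3]
            apply Fin.castSucc_inj.mp
            rw [resF_spec (hne_of_ne hf h3), h2, hf]
        · exact if_pos (Fin.castSucc_castPred _ hla)
      set φ' : Fin k → Fin d → ℝ := Function.update (fun b => φ b.castSucc) j v with hφ'
      have hjl : j.castSucc ≠ Fin.last k := (Fin.castSucc_lt_last j).ne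
      have hnl : ¬ (Fin.last k < j.castSucc) := not_lt.2 (Fin.castSucc_lt_last j).le
      rw [hsplit]
      have hterm : ∀ (jd : Fin d) (i₀ : Fin k → Fin d),
          (∏ a : Fin (k + 1),
            ((if embF j g a = a then φ a ((Fin.snoc i₀ jd : Fin (k + 1) → Fin d) a)
              else if a < embF j g a then
                (if (Fin.snoc i₀ jd : Fin (k + 1) → Fin d) a = (Fin.snoc i₀ jd : Fin (k + 1) → Fin d) (embF j g a) then (-1 : ℝ) else 0)
              else 1) * v ((Fin.snoc i₀ jd : Fin (k + 1) → Fin d) a)))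
          = (∏ b : Fin k, (if b = j then (if i₀ j = jd then (-1 : ℝ) else 0) * v (i₀ b)
              else ((if g b = b then φ' b (i₀ b)
                else if b < g b then (if i₀ b = i₀ (g b) then (-1 : ℝ) else 0) else 1)
                * v (i₀ b))))
            * v jd := by
        intro jd i₀
        rw [Fin.prod_univ_castSucc]
        congr 1
        · refine Finset.prod_congr rfl fun b _ => ?_
          rcases eq_or_ne b j with rfl | hbj
          · simp [Ne.symm hjl, Fin.castSucc_lt_last]
          · simp [hbj, Fin.castSucc_inj, Fin.castSucc_lt_castSucc_iff, hφ',
              Function.update_of_ne hbj]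
        · simp [hjl, hnl]
      simp only [hterm]
      rw [Finset.sum_comm]
      have h3 : ∀ i₀ : Fin k → Fin d,
          (∑ jd : Fin d, (∏ b : Fin k,
            (if b = j then (if i₀ j = jd then (-1 : ℝ) else 0) * v (i₀ b)
              else ((if g b = b then φ' b (i₀ b)
                else if b < g b then (if i₀ b = i₀ (g b) then (-1 : ℝ) else 0) else 1)
                * v (i₀ b)))) * v jd)
          = -(∏ b : Fin k,
              ((if g b = b then φ' b (i₀ b)
                else if b < g b then (if i₀ b = i₀ (g b) then (-1 : ℝ) else 0) else 1)
                * v (i₀ b))) := by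
        intro i₀
        have hD : ∀ jd : Fin d, (∏ b : Fin k,
            (if b = j then (if i₀ j = jd then (-1 : ℝ) else 0) * v (i₀ b)
              else ((if g b = b then φ' b (i₀ b)
                else if b < g b then (if i₀ b = i₀ (g b) then (-1 : ℝ) else 0) else 1)
                * v (i₀ b))))
            = (if i₀ j = jd then (-1 : ℝ) else 0) *
              (v (i₀ j) * ∏ b ∈ Finset.univ.erase j,
                ((if g b = b then φ' b (i₀ b)
                  else if b < g b then (if i₀ b = i₀ (g b) then (-1 : ℝ) else 0) else 1)
                  * v (i₀ b))) := by
          intro jd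
          rw [← Finset.mul_prod_erase _ _ (Finset.mem_univ j), if_pos rfl,
            Finset.prod_congr rfl (fun b hb => if_neg (Finset.mem_erase.mp hb).1)]
          ring
        simp only [hD]
        rw [← Finset.mul_prod_erase _ _ (Finset.mem_univ j), if_pos hgj, hφ',
          Function.update_self]
        simp only [ite_mul, zero_mul, neg_one_mul]
        rw [Finset.sum_ite_eq]
        simp only [Finset.mem_univ, if_pos]
        ring
      simp only [h3]
      rw [Finset.sum_neg_distrib, ih g hg φ', Fin.prod_univ_castSucc]
      have hClast : ((if embF j g (Fin.last k) = Fin.last k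
          then (∑ jd, φ (Fin.last k) jd * v jd)
          else if Fin.last k < embF j g (Fin.last k) then (-1 : ℝ) else 1)) = 1 := by
        simp [hjl, hnl]
      rw [hClast, mul_one]
      rw [← Finset.mul_prod_erase _ _ (Finset.mem_univ j),
        ← Finset.mul_prod_erase _ (fun b => _) (Finset.mem_univ j)]
      have hR'j : ((if g j = j then (∑ jd, φ' j jd * v jd)
          else if j < g j then (-1 : ℝ) else 1)) = 1 := by
        rw [if_pos hgj, hφ', Function.update_self]
        rw [← hv]
        refine Finset.sum_congr rfl fun jd _ => ?_
        ring
      have hCj : ((if embF j g j.castSucc = j.castSucc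
          then (∑ jd, φ j.castSucc jd * v jd)
          else if j.castSucc < embF j g j.castSucc then (-1 : ℝ) else 1)) = -1 := by
        simp [Ne.symm hjl, Fin.castSucc_lt_last]
      rw [hR'j, hCj, one_mul]
      have hrest : (∏ b ∈ Finset.univ.erase j,
          ((if g b = b then (∑ jd, φ' b jd * v jd)
            else if b < g b then (-1 : ℝ) else 1)))
          = ∏ b ∈ Finset.univ.erase j,
            ((if embF j g b.castSucc = b.castSucc
              then (∑ jd, φ b.castSucc jd * v jd)
              else if b.castSucc < embF j g b.castSucc then (-1 : ℝ) else 1)) := by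
        refine Finset.prod_congr rfl fun b hb => ?_
        have hbj : b ≠ j := (Finset.mem_erase.mp hb).1
        simp [hbj, Fin.castSucc_inj, Fin.castSucc_lt_castSucc_iff, hφ',
          Function.update_of_ne hbj]
      rw [hrest]
      ring

end HermiteAux

/-- For a unit vector `v` and any `x`: `⟨H_k(x), v^{⊗k}⟩ = h_k(v·x)`. -/
theorem hermite_tensor_pairing_unit (d k : ℕ) (v x : Fin d → ℝ) (hv : ∑ j, v j ^ 2 = 1) :
    hermitePairing d k x v = hermiteN k (∑ j, v j * x j) := by
  classical
  rw [hermitePairing]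
  simp only [hermiteTensor, mul_assoc, Finset.sum_mul]
  rw [← Finset.mul_sum, Finset.sum_comm]
  simp only [← Finset.prod_mul_distrib]
  rw [hermiteN, ← IP_eq, div_eq_inv_mul]
  congr 1
  have hIP : (Polynomial.aeval (∑ j, v j * x j) (IP k) : ℝ)
      = ∑ f ∈ Invol k, ((-1 : ℝ) ^ (prc f)) * (∑ j, v j * x j) ^ (fixc f) := by
    rw [IP, map_sum]
    refine Finset.sum_congr rfl fun f _ => ?_
    simp only [map_mul, map_pow, Polynomial.aeval_C, Polynomial.aeval_X]
    push_cast
    ring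
  rw [hIP]
  refine Finset.sum_congr rfl fun f hf => ?_
  have hfi : ∀ a, f (f a) = a := mem_Invol.mp hf
  have hkey := sum_prod_invol d v hv k f hfi (fun _ => x)
  beta_reduce at hkey
  rw [hkey]
  have hs : (∑ jd, x jd * v jd) = ∑ j, v j * x j :=
    Finset.sum_congr rfl fun jd _ => mul_comm _ _
  rw [hs, Finset.prod_ite, Finset.prod_const, Finset.prod_ite, Finset.prod_const,
    Finset.prod_const_one]
  have hfilter : ((Finset.univ.filter (fun a => ¬ f a = a)).filter (fun a => a < f a))
      = Finset.univ.filter (fun a => a < f a) := by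
    rw [Finset.filter_filter]
    refine Finset.filter_congr fun a _ => ?_
    exact ⟨And.right, fun h => ⟨fun he => by rw [he] at h; exact absurd h (lt_irrefl a), h⟩⟩
  rw [hfilter]
  show (∑ j, v j * x j) ^ (fixc f) * ((-1 : ℝ) ^ (prc f) * 1) = _
  ring
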